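/- Let n ≥ 2 be an integer and λ, σ ∈ ℂ. For every smooth u : B → ℂ on the open unit ball B ⊂ ℝ^{n−1}, the identity P_{σ+2}( (1−|Y|²)^{σ+2} · Δ_Y( (1−|Y|²)^{−σ} u ) ) = (1−|Y|²)^{σ+2} · Δ_Y( (1−|Y|²)^{−σ} · P_σ u ) holds at every point of B, where Δ_Y = Σⱼ ∂²/∂Yⱼ². -/

import Mathlib

/-- `∂ⱼ` on functions on `ℝ^m`. -/
noncomputable def pd {m : ℕ} (j : Fin m) (u : (Fin m → ℝ) → ℂ) (Y : Fin m → ℝ) : ℂ :=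
  fderiv ℝ u Y (Pi.single j 1)

/-- The Euler vector field `E u (Y) = Σⱼ Yⱼ ∂ⱼ u (Y)`. -/
noncomputable def euler {m : ℕ} (u : (Fin m → ℝ) → ℂ) (Y : Fin m → ℝ) : ℂ :=
  ∑ j, (Y j : ℂ) * pd j u Y

/-- The Euclidean Laplacian `Δ u = Σⱼ ∂ⱼ² u`. -/
noncomputable def lap {m : ℕ} (u : (Fin m → ℝ) → ℂ) (Y : Fin m → ℝ) : ℂ :=
  ∑ j, pd j (pd j u) Y

/-- The normal operator family `P_σ u = −(E + (n−1−σ))((E − σ)u) + Δ_Y u − λ u`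
acting on functions on `ℝ^{n−1}` (the real form of
`(YD_Y − i(n−1−σ))(YD_Y + iσ) − Δ_Y − λ`). -/
noncomputable def Pop (n : ℕ) (lam σ : ℂ) (u : (Fin (n - 1) → ℝ) → ℂ)
    (Y : Fin (n - 1) → ℝ) : ℂ :=
  -(euler (fun Z => euler u Z - σ * u Z) Y
      + ((n : ℂ) - 1 - σ) * (euler u Y - σ * u Y))
    + lap u Y - lam * u Y

namespace S15
variable {m : ℕ}

/-- The open unit ball. -/
def Bs (m : ℕ) : Set (Fin m → ℝ) := {Z | ∑ j, (Z j)^2 < 1}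

/-- `1 - |Z|²`. -/
def fr (Z : Fin m → ℝ) : ℝ := 1 - ∑ j, (Z j)^2

lemma isOpen_Bs : IsOpen (Bs m) := by
  have h : Continuous fun Z : Fin m → ℝ => ∑ j, (Z j)^2 := by fun_prop
  exact isOpen_lt h continuous_const

lemma fr_pos {Z : Fin m → ℝ} (h : Z ∈ Bs m) : 0 < fr Z := by
  simp only [Bs, Set.mem_setOf_eq] at h
  simp only [fr]; linarith

lemma contDiff_fr : ContDiff ℝ (⊤:ℕ∞) (fr (m := m)) := by
  have : ContDiff ℝ (⊤:ℕ∞) (fun Z : Fin m → ℝ => ∑ j, (Z j)^2) :=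
    ContDiff.sum fun j _ => (contDiff_apply ℝ ℝ j).pow 2
  exact contDiff_const.sub this

/-- `(1-|Z|²)^c`, written via `exp` and the real log. -/
noncomputable def Wc (c : ℂ) (Z : Fin m → ℝ) : ℂ :=
  Complex.exp (c * (Real.log (fr Z) : ℂ))

lemma Wc_add (c d : ℂ) (Z : Fin m → ℝ) : Wc (c + d) Z = Wc c Z * Wc d Z := by
  simp [Wc, add_mul, Complex.exp_add]

lemma Wc_zero (Z : Fin m → ℝ) : Wc 0 Z = 1 := by simp [Wc]

lemma Wc_ne_zero (c : ℂ) (Z : Fin m → ℝ) : Wc c Z ≠ 0 := Complex.exp_ne_zero _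

lemma Wc_one {Z : Fin m → ℝ} (h : Z ∈ Bs m) : Wc 1 Z = ((fr Z : ℝ) : ℂ) := by
  simp only [Wc, one_mul, ← Complex.ofReal_exp, Real.exp_log (fr_pos h)]

lemma Wc_eq_cpow {Z : Fin m → ℝ} (h : Z ∈ Bs m) (c : ℂ) :
    (((1 - ∑ j, (Z j) ^ 2 : ℝ)) : ℂ) ^ c = Wc c Z := by
  have h0 : ((1 - ∑ j, (Z j) ^ 2 : ℝ) : ℂ) ≠ 0 := by
    have := fr_pos h
    simp only [fr] at this
    exact_mod_cast this.ne'
  rw [Complex.cpow_def_of_ne_zero h0, Wc, mul_comm]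
  congr 2
  rw [Complex.ofReal_log (le_of_lt (fr_pos h))]
  simp only [fr]

lemma contDiffOn_Wc (c : ℂ) : ContDiffOn ℝ (⊤:ℕ∞) (Wc c) (Bs m) := by
  have hlog : ContDiffOn ℝ (⊤:ℕ∞) (fun Z : Fin m → ℝ => Real.log (fr Z)) (Bs m) :=
    (contDiff_fr.contDiffOn).log fun Z hZ => (fr_pos hZ).ne'
  have h1 : ContDiffOn ℝ (⊤:ℕ∞) (fun Z : Fin m → ℝ => ((Real.log (fr Z) : ℝ) : ℂ)) (Bs m) :=
    Complex.ofRealCLM.contDiff.comp_contDiffOn hlog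
  have h2 : ContDiffOn ℝ (⊤:ℕ∞) (fun Z : Fin m → ℝ => c * ((Real.log (fr Z) : ℝ) : ℂ)) (Bs m) :=
    (contDiffOn_const : ContDiffOn ℝ (⊤:ℕ∞) (fun _ : Fin m → ℝ => c) (Bs m)).mul h1
  exact h2.cexp

end S15

section PD
variable {m : ℕ}
open ContinuousLinearMap in
lemma pd_coord {Z : Fin m → ℝ} (j k : Fin m) :
    pd j (fun Z => ((Z k : ℝ) : ℂ)) Z = if k = j then 1 else 0 := by
  have : (fun Z : Fin m → ℝ => ((Z k : ℝ) : ℂ))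
      = Complex.ofRealCLM.comp (ContinuousLinearMap.proj k) := rfl
  rw [pd, this, ContinuousLinearMap.fderiv]
  simp [Pi.single_apply]
  split <;> simp

lemma diffAt {w : (Fin m → ℝ) → ℂ} (hw : ContDiffOn ℝ (⊤:ℕ∞) w (S15.Bs m))
    {Z : Fin m → ℝ} (hZ : Z ∈ S15.Bs m) : DifferentiableAt ℝ w Z :=
  (hw.differentiableOn (by simp)).differentiableAt (S15.isOpen_Bs.mem_nhds hZ)

lemma diffAt_coord {Z : Fin m → ℝ} (k : Fin m) :
    DifferentiableAt ℝ (fun Z : Fin m → ℝ => ((Z k : ℝ) : ℂ)) Z := by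
  exact Differentiable.differentiableAt
    (Complex.ofRealCLM.differentiable.comp
      ((ContinuousLinearMap.proj k : (Fin m → ℝ) →L[ℝ] ℝ).differentiable))

lemma pd_congr {w₁ w₂ : (Fin m → ℝ) → ℂ} (h : ∀ Z ∈ S15.Bs m, w₁ Z = w₂ Z)
    {Z : Fin m → ℝ} (hZ : Z ∈ S15.Bs m) (j : Fin m) : pd j w₁ Z = pd j w₂ Z := by
  unfold pd
  rw [Filter.EventuallyEq.fderiv_eq (Filter.eventuallyEq_of_mem (S15.isOpen_Bs.mem_nhds hZ) h)]

lemma pd_add {w₁ w₂ : (Fin m → ℝ) → ℂ} {Z : Fin m → ℝ}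
    (h₁ : DifferentiableAt ℝ w₁ Z) (h₂ : DifferentiableAt ℝ w₂ Z) (j : Fin m) :
    pd j (fun Z => w₁ Z + w₂ Z) Z = pd j w₁ Z + pd j w₂ Z := by
  unfold pd; rw [fderiv_fun_add h₁ h₂]; rfl

lemma pd_const_mul {w : (Fin m → ℝ) → ℂ} {Z : Fin m → ℝ}
    (h : DifferentiableAt ℝ w Z) (a : ℂ) (j : Fin m) :
    pd j (fun Z => a * w Z) Z = a * pd j w Z := by
  unfold pd; rw [fderiv_const_mul h]; rfl

lemma pd_mul {w₁ w₂ : (Fin m → ℝ) → ℂ} {Z : Fin m → ℝ}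
    (h₁ : DifferentiableAt ℝ w₁ Z) (h₂ : DifferentiableAt ℝ w₂ Z) (j : Fin m) :
    pd j (fun Z => w₁ Z * w₂ Z) Z = pd j w₁ Z * w₂ Z + w₁ Z * pd j w₂ Z := by
  unfold pd; rw [fderiv_fun_mul h₁ h₂]
  simp [smul_eq_mul]; ring

lemma pd_sum {ι : Type*} (s : Finset ι) {w : ι → (Fin m → ℝ) → ℂ} {Z : Fin m → ℝ}
    (h : ∀ i ∈ s, DifferentiableAt ℝ (w i) Z) (j : Fin m) :
    pd j (fun Z => ∑ i ∈ s, w i Z) Z = ∑ i ∈ s, pd j (w i) Z := by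
  unfold pd
  rw [fderiv_fun_sum h]; simp

lemma contDiffOn_pd {w : (Fin m → ℝ) → ℂ} (hw : ContDiffOn ℝ (⊤:ℕ∞) w (S15.Bs m)) (j : Fin m) :
    ContDiffOn ℝ (⊤:ℕ∞) (pd j w) (S15.Bs m) := by
  have h1 : ContDiffOn ℝ (⊤:ℕ∞) (fderiv ℝ w) (S15.Bs m) :=
    hw.fderiv_of_isOpen S15.isOpen_Bs (by simp)
  exact (ContinuousLinearMap.apply ℝ ℂ (Pi.single j 1)).contDiff.comp_contDiffOn h1

lemma contDiffOn_euler {w : (Fin m → ℝ) → ℂ} (hw : ContDiffOn ℝ (⊤:ℕ∞) w (S15.Bs m)) :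
    ContDiffOn ℝ (⊤:ℕ∞) (euler w) (S15.Bs m) := by
  unfold euler
  apply ContDiffOn.sum fun j _ => ?_
  have hc : ContDiff ℝ (⊤:ℕ∞) (fun Z : Fin m → ℝ => ((Z j : ℝ) : ℂ)) :=
    Complex.ofRealCLM.contDiff.comp ((ContinuousLinearMap.proj j : (Fin m → ℝ) →L[ℝ] ℝ).contDiff)
  exact hc.contDiffOn.mul (contDiffOn_pd hw j)

lemma contDiffOn_lap {w : (Fin m → ℝ) → ℂ} (hw : ContDiffOn ℝ (⊤:ℕ∞) w (S15.Bs m)) :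
    ContDiffOn ℝ (⊤:ℕ∞) (lap w) (S15.Bs m) := by
  unfold lap
  exact ContDiffOn.sum fun j _ => contDiffOn_pd (contDiffOn_pd hw j) j

lemma euler_congr {w₁ w₂ : (Fin m → ℝ) → ℂ} (h : ∀ Z ∈ S15.Bs m, w₁ Z = w₂ Z)
    {Z : Fin m → ℝ} (hZ : Z ∈ S15.Bs m) : euler w₁ Z = euler w₂ Z := by
  unfold euler
  exact Finset.sum_congr rfl fun j _ => by rw [pd_congr h hZ j]

lemma lap_congr {w₁ w₂ : (Fin m → ℝ) → ℂ} (h : ∀ Z ∈ S15.Bs m, w₁ Z = w₂ Z)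
    {Z : Fin m → ℝ} (hZ : Z ∈ S15.Bs m) : lap w₁ Z = lap w₂ Z := by
  unfold lap
  exact Finset.sum_congr rfl fun j _ =>
    pd_congr (fun W hW => pd_congr h hW j) hZ j
end PD

section WcDeriv
variable {m : ℕ}
open ContinuousLinearMap

lemma myL_apply {Z : Fin m → ℝ} (j : Fin m) :
    (∑ k : Fin m, ((2:ℝ) * Z k) • (proj k : (Fin m → ℝ) →L[ℝ] ℝ)) (Pi.single j 1)
      = 2 * Z j := by
  simp [ContinuousLinearMap.sum_apply, Pi.single_apply]

lemma hasFDerivAt_fr {Z : Fin m → ℝ} :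
    HasFDerivAt (S15.fr (m:=m))
      (-(∑ k : Fin m, ((2:ℝ) * Z k) • (proj k : (Fin m → ℝ) →L[ℝ] ℝ))) Z := by
  have h : HasFDerivAt (fun W : Fin m → ℝ => ∑ k, (W k)^2)
      (∑ k : Fin m, ((2:ℝ) * Z k) • (proj k : (Fin m → ℝ) →L[ℝ] ℝ)) Z := by
    apply HasFDerivAt.fun_sum
    intro k _
    have hp := ((proj k : (Fin m → ℝ) →L[ℝ] ℝ).hasFDerivAt (x := Z)).fun_mul
      ((proj k : (Fin m → ℝ) →L[ℝ] ℝ).hasFDerivAt (x := Z))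
    simp only [ContinuousLinearMap.proj_apply] at hp
    have heq : (fun W : Fin m → ℝ => (W k)^2) = fun W => W k * W k := by
      funext W; ring
    rw [heq]
    rw [show ((2:ℝ) * Z k) • (proj k : (Fin m → ℝ) →L[ℝ] ℝ) = Z k • proj k + Z k • proj k by
      rw [two_mul, add_smul]]
    exact hp
  exact h.const_sub 1

lemma S15.Wc_neg_one {Z : Fin m → ℝ} (h : Z ∈ S15.Bs m) :
    S15.Wc (-1) Z = (((S15.fr Z : ℝ)) : ℂ)⁻¹ := by
  rw [S15.Wc, neg_one_mul, Complex.exp_neg, ← Complex.ofReal_exp,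
    Real.exp_log (S15.fr_pos h)]

lemma pd_Wc (c : ℂ) {Z : Fin m → ℝ} (hZ : Z ∈ S15.Bs m) (j : Fin m) :
    pd j (S15.Wc c) Z = (-2 * c * (Z j)) * S15.Wc (c-1) Z := by
  have hfr : HasFDerivAt (S15.fr (m:=m))
      (-(∑ k : Fin m, ((2:ℝ) * Z k) • (proj k : (Fin m → ℝ) →L[ℝ] ℝ))) Z := hasFDerivAt_fr
  have hlog := (Real.hasDerivAt_log (S15.fr_pos hZ).ne').comp_hasFDerivAt Z hfr
  have hcast := Complex.ofRealCLM.hasFDerivAt.comp Z hlog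
  have hmul := hcast.const_mul c
  have hexp := ((Complex.hasDerivAt_exp
      (c * ((Real.log (S15.fr Z) : ℝ) : ℂ))).hasFDerivAt.restrictScalars ℝ).comp Z hmul
  have hpd : pd j (S15.Wc c) Z = _ :=
    congrArg (fun (L : (Fin m → ℝ) →L[ℝ] ℂ) => L (Pi.single j 1)) hexp.fderiv
  rw [hpd]
  rw [sub_eq_add_neg, S15.Wc_add, S15.Wc_neg_one hZ]
  have hfne : (((S15.fr Z : ℝ)) : ℂ) ≠ 0 := by exact_mod_cast (S15.fr_pos hZ).ne'
  simp only [ContinuousLinearMap.coe_comp', Function.comp_apply,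
    ContinuousLinearMap.coe_restrictScalars', ContinuousLinearMap.smulRight_apply,
    ContinuousLinearMap.one_apply, ContinuousLinearMap.coe_smul', Pi.smul_apply,
    smul_eq_mul, Complex.ofRealCLM_apply, ContinuousLinearMap.neg_apply, myL_apply,
    ContinuousLinearMap.toSpanSingleton_apply]
  unfold S15.Wc
  push_cast
  field_simp
  try ring
  try tauto
end WcDeriv

section Ops
variable {m : ℕ} {w g h : (Fin m → ℝ) → ℂ} {Y : Fin m → ℝ}

lemma sum_coord_sq (Y : Fin m → ℝ) :
    (∑ j, ((Y j : ℝ):ℂ) * ((Y j : ℝ):ℂ)) = 1 - ((S15.fr Y : ℝ) : ℂ) := by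
  have : (∑ j, ((Y j : ℝ):ℂ) * ((Y j : ℝ):ℂ)) = (((∑ j, (Y j)^2 : ℝ)) : ℂ) := by
    push_cast; exact Finset.sum_congr rfl fun j _ => by ring
  rw [this, S15.fr]; push_cast; ring

lemma Wc_shift (c : ℂ) (hY : Y ∈ S15.Bs m) :
    ((S15.fr Y : ℝ) : ℂ) * S15.Wc (c-1) Y = S15.Wc c Y := by
  rw [← S15.Wc_one hY, ← S15.Wc_add, show (1 : ℂ) + (c-1) = c by ring]

lemma euler_add (hg : DifferentiableAt ℝ g Y) (hh : DifferentiableAt ℝ h Y) :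
    euler (fun Z => g Z + h Z) Y = euler g Y + euler h Y := by
  unfold euler
  rw [← Finset.sum_add_distrib]
  exact Finset.sum_congr rfl fun j _ => by rw [pd_add hg hh j]; ring

lemma euler_const_mul (hg : DifferentiableAt ℝ g Y) (a : ℂ) :
    euler (fun Z => a * g Z) Y = a * euler g Y := by
  unfold euler
  rw [Finset.mul_sum]
  exact Finset.sum_congr rfl fun j _ => by rw [pd_const_mul hg a j]; ring

lemma lap_add (hg : ContDiffOn ℝ (⊤:ℕ∞) g (S15.Bs m)) (hh : ContDiffOn ℝ (⊤:ℕ∞) h (S15.Bs m))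
    (hY : Y ∈ S15.Bs m) :
    lap (fun Z => g Z + h Z) Y = lap g Y + lap h Y := by
  unfold lap
  rw [← Finset.sum_add_distrib]
  refine Finset.sum_congr rfl fun j _ => ?_
  have h1 : ∀ Z ∈ S15.Bs m, pd j (fun Z => g Z + h Z) Z = pd j g Z + pd j h Z :=
    fun Z hZ => pd_add (diffAt hg hZ) (diffAt hh hZ) j
  rw [pd_congr h1 hY j,
    pd_add (diffAt (contDiffOn_pd hg j) hY) (diffAt (contDiffOn_pd hh j) hY) j]

lemma lap_const_mul (hg : ContDiffOn ℝ (⊤:ℕ∞) g (S15.Bs m)) (hY : Y ∈ S15.Bs m) (a : ℂ) :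
    lap (fun Z => a * g Z) Y = a * lap g Y := by
  unfold lap
  rw [Finset.mul_sum]
  refine Finset.sum_congr rfl fun j _ => ?_
  have h1 : ∀ Z ∈ S15.Bs m, pd j (fun Z => a * g Z) Z = a * pd j g Z :=
    fun Z hZ => pd_const_mul (diffAt hg hZ) a j
  rw [pd_congr h1 hY j, pd_const_mul (diffAt (contDiffOn_pd hg j) hY) a j]

/-- L1 -/
lemma euler_Wc_mul (c : ℂ) (hw : ContDiffOn ℝ (⊤:ℕ∞) w (S15.Bs m)) (hY : Y ∈ S15.Bs m) :
    euler (fun Z => S15.Wc c Z * w Z) Y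
      = S15.Wc c Y * euler w Y + (-2*c) * (S15.Wc (c-1) Y - S15.Wc c Y) * w Y := by
  have hpd : ∀ j : Fin m, (Y j : ℂ) * pd j (fun Z => S15.Wc c Z * w Z) Y
      = ((Y j:ℂ)*(Y j:ℂ)) * ((-2*c) * (S15.Wc (c-1) Y * w Y))
        + S15.Wc c Y * ((Y j:ℂ) * pd j w Y) := fun j => by
    rw [pd_mul (diffAt (S15.contDiffOn_Wc c) hY) (diffAt hw hY) j, pd_Wc c hY j]; ring
  unfold euler
  rw [Finset.sum_congr rfl fun j _ => hpd j, Finset.sum_add_distrib, ← Finset.sum_mul,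
    ← Finset.mul_sum, sum_coord_sq]
  have hWc1 := Wc_shift c hY
  show _ = S15.Wc c Y * euler w Y + _
  unfold euler
  linear_combination (2*c*(w Y)) * hWc1

/-- L2 -/
lemma lap_Wc_mul (c : ℂ) (hw : ContDiffOn ℝ (⊤:ℕ∞) w (S15.Bs m)) (hY : Y ∈ S15.Bs m) :
    lap (fun Z => S15.Wc c Z * w Z) Y
      = S15.Wc c Y * lap w Y + (-4*c) * S15.Wc (c-1) Y * euler w Y
        + ((-2*(m:ℂ)*c) * S15.Wc (c-1) Y
            + (4*c*(c-1)) * (S15.Wc (c-2) Y - S15.Wc (c-1) Y)) * w Y := by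
  have hfun : ∀ j : Fin m, ∀ Z ∈ S15.Bs m, pd j (fun Z => S15.Wc c Z * w Z) Z
      = (-2*c) * ((Z j : ℝ):ℂ) * (S15.Wc (c-1) Z * w Z) + S15.Wc c Z * pd j w Z := by
    intro j Z hZ
    rw [pd_mul (diffAt (S15.contDiffOn_Wc c) hZ) (diffAt hw hZ) j, pd_Wc c hZ j]; ring
  have sm1 : ContDiffOn ℝ (⊤:ℕ∞) (fun Z => S15.Wc (c-1) Z * w Z) (S15.Bs m) :=
    (S15.contDiffOn_Wc (c-1)).mul hw
  have hj : ∀ j : Fin m, pd j (pd j (fun Z => S15.Wc c Z * w Z)) Y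
      = (-2*c) * (S15.Wc (c-1) Y * w Y)
        + ((Y j:ℂ)*(Y j:ℂ)) * ((4*c*(c-1)) * (S15.Wc (c-2) Y * w Y))
        + ((-4*c) * S15.Wc (c-1) Y) * ((Y j:ℂ) * pd j w Y)
        + S15.Wc c Y * pd j (pd j w) Y := by
    intro j
    rw [pd_congr (hfun j) hY j]
    have d1 : DifferentiableAt ℝ (fun Z : Fin m → ℝ => (-2*c) * ((Z j : ℝ):ℂ)) Y :=
      (diffAt_coord j).const_mul _
    have d2 : DifferentiableAt ℝ (fun Z => S15.Wc (c-1) Z * w Z) Y := diffAt sm1 hY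
    have d3 : DifferentiableAt ℝ
        (fun Z : Fin m → ℝ => (-2*c) * ((Z j : ℝ):ℂ) * (S15.Wc (c-1) Z * w Z)) Y := d1.mul d2
    have d4 : DifferentiableAt ℝ (fun Z => S15.Wc c Z * pd j w Z) Y :=
      (diffAt (S15.contDiffOn_Wc c) hY).mul (diffAt (contDiffOn_pd hw j) hY)
    rw [pd_add d3 d4 j, pd_mul d1 d2 j, pd_mul (diffAt (S15.contDiffOn_Wc (c-1)) hY)
      (diffAt hw hY) j, pd_mul (diffAt (S15.contDiffOn_Wc c) hY)
      (diffAt (contDiffOn_pd hw j) hY) j, pd_Wc (c-1) hY j, pd_Wc c hY j,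
      pd_const_mul (diffAt_coord j) (-2*c) j, pd_coord]
    norm_num
    have h2 : (c - 1 - 1 : ℂ) = c - 2 := by ring
    rw [h2]; ring
  have hs1 : (∑ _j : Fin m, ((-2*c) * (S15.Wc (c-1) Y * w Y)))
      = (m:ℂ) * ((-2*c) * (S15.Wc (c-1) Y * w Y)) := by
    rw [Finset.sum_const, Finset.card_univ, Fintype.card_fin, nsmul_eq_mul]
  have hs2 : (∑ j : Fin m, ((Y j:ℂ)*(Y j:ℂ)) * ((4*c*(c-1)) * (S15.Wc (c-2) Y * w Y)))
      = (1 - ((S15.fr Y : ℝ) : ℂ)) * ((4*c*(c-1)) * (S15.Wc (c-2) Y * w Y)) := by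
    rw [← Finset.sum_mul, sum_coord_sq]
  have hs3 : (∑ j : Fin m, ((-4*c) * S15.Wc (c-1) Y) * ((Y j:ℂ) * pd j w Y))
      = ((-4*c) * S15.Wc (c-1) Y) * euler w Y := by
    rw [euler, Finset.mul_sum]
  have hs4 : (∑ j : Fin m, S15.Wc c Y * pd j (pd j w) Y) = S15.Wc c Y * lap w Y := by
    rw [lap, Finset.mul_sum]
  have hlhs : lap (fun Z => S15.Wc c Z * w Z) Y
      = ∑ j, pd j (pd j (fun Z => S15.Wc c Z * w Z)) Y := rfl
  rw [hlhs, Finset.sum_congr rfl fun j _ => hj j, Finset.sum_add_distrib, Finset.sum_add_distrib,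
    Finset.sum_add_distrib, hs1, hs2, hs3, hs4]
  have hWc2 := Wc_shift (c-1) hY
  have h2 : (c - 1 - 1 : ℂ) = c - 2 := by ring
  rw [h2] at hWc2
  linear_combination (-4*c*(c-1)*(w Y)) * hWc2
end Ops

section Comm
variable {m : ℕ} {w : (Fin m → ℝ) → ℂ} {Y : Fin m → ℝ}

lemma pd_comm (hw : ContDiffOn ℝ (⊤:ℕ∞) w (S15.Bs m)) (hY : Y ∈ S15.Bs m) (j k : Fin m) :
    pd j (pd k w) Y = pd k (pd j w) Y := by
  have hfd : ContDiffOn ℝ (⊤:ℕ∞) (fderiv ℝ w) (S15.Bs m) :=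
    hw.fderiv_of_isOpen S15.isOpen_Bs (by simp)
  have hD : DifferentiableAt ℝ (fderiv ℝ w) Y :=
    (hfd.differentiableOn (by simp)).differentiableAt (S15.isOpen_Bs.mem_nhds hY)
  have hsym : IsSymmSndFDerivAt ℝ w Y := by
    apply (hw.contDiffAt (S15.isOpen_Bs.mem_nhds hY)).isSymmSndFDerivAt
    rw [minSmoothness_of_isRCLikeNormedField]
    exact_mod_cast ENat.natCast_le_of_coe_top_le_withTop le_rfl 2
  have key : ∀ a b : Fin m, pd a (pd b w) Y
      = fderiv ℝ (fderiv ℝ w) Y (Pi.single a 1) (Pi.single b 1) := by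
    intro a b
    unfold pd
    rw [fderiv_clm_apply hD (differentiableAt_const _)]
    simp
  rw [key j k, key k j, hsym]

lemma pd_euler (hw : ContDiffOn ℝ (⊤:ℕ∞) w (S15.Bs m)) (hY : Y ∈ S15.Bs m) (k : Fin m) :
    pd k (euler w) Y = pd k w Y + euler (pd k w) Y := by
  have hterm : ∀ l : Fin m, DifferentiableAt ℝ (fun Z => ((Z l : ℝ):ℂ) * pd l w Z) Y :=
    fun l => (diffAt_coord l).mul (diffAt (contDiffOn_pd hw l) hY)
  have h0 : pd k (euler w) Y = ∑ l, pd k (fun Z => ((Z l : ℝ):ℂ) * pd l w Z) Y := by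
    unfold euler
    exact pd_sum Finset.univ (fun l _ => hterm l) k
  rw [h0]
  have h1 : ∀ l : Fin m, pd k (fun Z => ((Z l : ℝ):ℂ) * pd l w Z) Y
      = (if l = k then pd l w Y else 0) + ((Y l:ℂ) * pd l (pd k w) Y) := by
    intro l
    rw [pd_mul (diffAt_coord l) (diffAt (contDiffOn_pd hw l) hY) k, pd_coord,
      pd_comm hw hY k l]
    split <;> ring
  rw [Finset.sum_congr rfl fun l _ => h1 l, Finset.sum_add_distrib]
  unfold euler
  congr 1
  simp

lemma lap_euler (hw : ContDiffOn ℝ (⊤:ℕ∞) w (S15.Bs m)) (hY : Y ∈ S15.Bs m) :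
    lap (euler w) Y = euler (lap w) Y + 2 * lap w Y := by
  have h2 : ∀ j : Fin m, pd j (pd j (euler w)) Y
      = pd j (pd j w) Y + (pd j (pd j w) Y + euler (pd j (pd j w)) Y) := by
    intro j
    have h1 : ∀ Z ∈ S15.Bs m, pd j (euler w) Z = pd j w Z + euler (pd j w) Z :=
      fun Z hZ => pd_euler hw hZ j
    rw [pd_congr h1 hY j,
      pd_add (diffAt (contDiffOn_pd hw j) hY)
        (diffAt (contDiffOn_euler (contDiffOn_pd hw j)) hY) j,
      pd_euler (contDiffOn_pd hw j) hY j]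
  have h3 : euler (lap w) Y = ∑ j, euler (pd j (pd j w)) Y := by
    have h4 : ∀ l : Fin m, pd l (lap w) Y = ∑ j, pd l (pd j (pd j w)) Y := by
      intro l
      unfold lap
      exact pd_sum Finset.univ
        (fun j _ => diffAt (contDiffOn_pd (contDiffOn_pd hw j) j) hY) l
    have h5 : euler (lap w) Y = ∑ l, ∑ j, (Y l:ℂ) * pd l (pd j (pd j w)) Y := by
      unfold euler
      exact Finset.sum_congr rfl fun l _ => by rw [h4 l, Finset.mul_sum]
    rw [h5]
    rw [Finset.sum_comm]
    rfl
  have hlhs : lap (euler w) Y = ∑ j, pd j (pd j (euler w)) Y := rfl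
  rw [hlhs, Finset.sum_congr rfl fun j _ => h2 j, Finset.sum_add_distrib,
    Finset.sum_add_distrib, ← h3]
  have h6 : lap w Y = ∑ j, pd j (pd j w) Y := rfl
  rw [show (∑ j, pd j (pd j w) Y) = lap w Y from rfl]
  ring
end Comm

section Conj

lemma Pop_congr {n : ℕ} {lam s : ℂ} {g₁ g₂ : (Fin (n-1) → ℝ) → ℂ}
    (h : ∀ Z ∈ S15.Bs (n-1), g₁ Z = g₂ Z) {Y : Fin (n-1) → ℝ} (hY : Y ∈ S15.Bs (n-1)) :
    Pop n lam s g₁ Y = Pop n lam s g₂ Y := by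
  unfold Pop
  rw [euler_congr h hY, lap_congr h hY, h Y hY,
    euler_congr (fun Z hZ => by rw [euler_congr h hZ, h Z hZ]) hY]

lemma conj_Pop (n : ℕ) (hn : 2 ≤ n) (lam τ : ℂ) {w : (Fin (n-1) → ℝ) → ℂ}
    (hw : ContDiffOn ℝ (⊤:ℕ∞) w (S15.Bs (n-1))) {Y : Fin (n-1) → ℝ}
    (hY : Y ∈ S15.Bs (n-1)) :
    Pop n lam τ (fun Z => S15.Wc τ Z * w Z) Y
      = S15.Wc τ Y * (-(euler (euler w) Y) - ((n:ℂ) - 1 + 2*τ) * euler w Y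
          - (τ*τ + τ*((n:ℂ)-1) + lam) * w Y + lap w Y) := by
  have hm : ((n - 1 : ℕ) : ℂ) = (n:ℂ) - 1 := by
    have : (1:ℕ) ≤ n := le_trans one_le_two hn
    push_cast [Nat.cast_sub this]; ring
  have hsmw : ∀ c : ℂ, ContDiffOn ℝ (⊤:ℕ∞) (fun Z => S15.Wc c Z * w Z) (S15.Bs (n-1)) :=
    fun c => (S15.contDiffOn_Wc c).mul hw
  have hEfun : ∀ Z ∈ S15.Bs (n-1), euler (fun Z' => S15.Wc τ Z' * w Z') Z
      = S15.Wc τ Z * euler w Z + (-2*τ) * (S15.Wc (τ-1) Z - S15.Wc τ Z) * w Z :=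
    fun Z hZ => euler_Wc_mul τ hw hZ
  have hcombo : ∀ Z ∈ S15.Bs (n-1),
      (euler (fun Z' => S15.Wc τ Z' * w Z') Z - τ * (S15.Wc τ Z * w Z))
      = S15.Wc τ Z * euler w Z
          + ((-2*τ) * (S15.Wc (τ-1) Z * w Z) + τ * (S15.Wc τ Z * w Z)) := by
    intro Z hZ; rw [hEfun Z hZ]; ring
  have d1 : DifferentiableAt ℝ (fun Z => S15.Wc τ Z * euler w Z) Y :=
    diffAt ((S15.contDiffOn_Wc τ).mul (contDiffOn_euler hw)) hY
  have d2 : DifferentiableAt ℝ (fun Z => (-2*τ) * (S15.Wc (τ-1) Z * w Z)) Y :=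
    (diffAt (hsmw (τ-1)) hY).const_mul _
  have d3 : DifferentiableAt ℝ (fun Z => τ * (S15.Wc τ Z * w Z)) Y :=
    (diffAt (hsmw τ) hY).const_mul _
  have hE2 : euler (fun Z => euler (fun Z' => S15.Wc τ Z' * w Z') Z
        - τ * (S15.Wc τ Z * w Z)) Y
      = euler (fun Z => S15.Wc τ Z * euler w Z) Y
        + ((-2*τ) * euler (fun Z => S15.Wc (τ-1) Z * w Z) Y
            + τ * euler (fun Z => S15.Wc τ Z * w Z) Y) := by
    rw [euler_congr hcombo hY, euler_add d1 (d2.fun_add d3),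
      euler_add d2 d3, euler_const_mul (diffAt (hsmw (τ-1)) hY) (-2*τ),
      euler_const_mul (diffAt (hsmw τ) hY) τ]
  unfold Pop
  rw [hE2, euler_Wc_mul τ (contDiffOn_euler hw) hY, euler_Wc_mul (τ-1) hw hY,
    euler_Wc_mul τ hw hY, lap_Wc_mul τ hw hY]
  simp only [hm]
  have hA : S15.Wc (τ-1) Y = S15.Wc τ Y * S15.Wc (-1) Y := by
    rw [← S15.Wc_add, show τ + (-1:ℂ) = τ - 1 by ring]
  have hB : S15.Wc (τ-1-1) Y = S15.Wc τ Y * S15.Wc (-1) Y * S15.Wc (-1) Y := by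
    rw [mul_assoc, ← S15.Wc_add, ← S15.Wc_add, show τ + (-1 + -1 :ℂ) = τ - 1 - 1 by ring]
  have hC : S15.Wc (τ-2) Y = S15.Wc τ Y * S15.Wc (-1) Y * S15.Wc (-1) Y := by
    rw [mul_assoc, ← S15.Wc_add, ← S15.Wc_add, show τ + (-1 + -1 :ℂ) = τ - 2 by ring]
  rw [hA, hB, hC]
  ring
end Conj

/-- the weighted intertwining identity
`P_{σ+2}((1−|Y|²)^{σ+2} Δ_Y((1−|Y|²)^{−σ} u))
   = (1−|Y|²)^{σ+2} Δ_Y((1−|Y|²)^{−σ} P_σ u)`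
on the open unit ball `B ⊂ ℝ^{n−1}`, for every `u` smooth on `B`. -/
theorem stmt15 (n : ℕ) (hn : 2 ≤ n) (lam σ : ℂ)
    (u : (Fin (n - 1) → ℝ) → ℂ)
    (hu : ContDiffOn ℝ (⊤ : ℕ∞) u {Y : Fin (n - 1) → ℝ | ∑ j, (Y j) ^ 2 < 1}) :
    ∀ Y ∈ {Y : Fin (n - 1) → ℝ | ∑ j, (Y j) ^ 2 < 1},
      Pop n lam (σ + 2)
          (fun Z => (((1 - ∑ j, (Z j) ^ 2 : ℝ)) : ℂ) ^ (σ + 2) *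
            lap (fun W => (((1 - ∑ j, (W j) ^ 2 : ℝ)) : ℂ) ^ (-σ) * u W) Z) Y
        = (((1 - ∑ j, (Y j) ^ 2 : ℝ)) : ℂ) ^ (σ + 2) *
            lap (fun W => (((1 - ∑ j, (W j) ^ 2 : ℝ)) : ℂ) ^ (-σ) *
              Pop n lam σ u W) Y := by
  intro Y hY
  have hY' : Y ∈ S15.Bs (n-1) := hY
  have hu' : ContDiffOn ℝ (⊤:ℕ∞) u (S15.Bs (n-1)) := hu
  set v := fun Z : Fin (n-1) → ℝ => S15.Wc (-σ) Z * u Z with hv_def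
  have hv : ContDiffOn ℝ (⊤:ℕ∞) v (S15.Bs (n-1)) := (S15.contDiffOn_Wc (-σ)).mul hu'
  have hu_eq : ∀ Z, S15.Wc σ Z * v Z = u Z := fun Z => by
    rw [hv_def, ← mul_assoc, ← S15.Wc_add, show σ + -σ = 0 by ring, S15.Wc_zero, one_mul]
  have sE : ContDiffOn ℝ (⊤:ℕ∞) (euler v) (S15.Bs (n-1)) := contDiffOn_euler hv
  have sEE : ContDiffOn ℝ (⊤:ℕ∞) (euler (euler v)) (S15.Bs (n-1)) := contDiffOn_euler sE
  have sL : ContDiffOn ℝ (⊤:ℕ∞) (lap v) (S15.Bs (n-1)) := contDiffOn_lap hv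
  -- LHS rewrite
  have hLv : ∀ Z ∈ S15.Bs (n-1),
      lap (fun W => (((1 - ∑ j, (W j) ^ 2 : ℝ)) : ℂ) ^ (-σ) * u W) Z = lap v Z :=
    fun Z hZ => lap_congr (fun W hW => by rw [S15.Wc_eq_cpow hW (-σ), hv_def]) hZ
  have hG : ∀ Z ∈ S15.Bs (n-1),
      (((1 - ∑ j, (Z j) ^ 2 : ℝ)) : ℂ) ^ (σ+2) *
        lap (fun W => (((1 - ∑ j, (W j) ^ 2 : ℝ)) : ℂ) ^ (-σ) * u W) Z
      = S15.Wc (σ+2) Z * lap v Z :=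
    fun Z hZ => by rw [S15.Wc_eq_cpow hZ (σ+2), hLv Z hZ]
  rw [Pop_congr (g₂ := fun Z => S15.Wc (σ+2) Z * lap v Z) hG hY',
    conj_Pop n hn lam (σ+2) sL hY', S15.Wc_eq_cpow hY' (σ+2)]
  -- RHS rewrite
  have hp : ∀ Z ∈ S15.Bs (n-1),
      (((1 - ∑ j, (Z j) ^ 2 : ℝ)) : ℂ) ^ (-σ) * Pop n lam σ u Z
      = (-1:ℂ) * euler (euler v) Z + ((-((n:ℂ)-1+2*σ)) * euler v Z
          + ((-(σ*σ+σ*((n:ℂ)-1)+lam)) * v Z + lap v Z)) := by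
    intro Z hZ
    rw [S15.Wc_eq_cpow hZ (-σ),
      Pop_congr (g₂ := fun W => S15.Wc σ W * v W) (fun W _ => (hu_eq W).symm) hZ,
      conj_Pop n hn lam σ hv hZ, ← mul_assoc, ← S15.Wc_add,
      show -σ + σ = 0 by ring, S15.Wc_zero, one_mul]
    ring
  rw [lap_congr hp hY']
  -- expand lap of the combination
  have s1 : ContDiffOn ℝ (⊤:ℕ∞) (fun Z => (-1:ℂ) * euler (euler v) Z) (S15.Bs (n-1)) :=
    contDiffOn_const.mul sEE
  have s2 : ContDiffOn ℝ (⊤:ℕ∞) (fun Z => (-((n:ℂ)-1+2*σ)) * euler v Z) (S15.Bs (n-1)) :=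
    contDiffOn_const.mul sE
  have s3 : ContDiffOn ℝ (⊤:ℕ∞) (fun Z => (-(σ*σ+σ*((n:ℂ)-1)+lam)) * v Z) (S15.Bs (n-1)) :=
    contDiffOn_const.mul hv
  rw [lap_add s1 (s2.add (s3.add sL)) hY', lap_add s2 (s3.add sL) hY',
    lap_add s3 sL hY', lap_const_mul sEE hY' (-1), lap_const_mul sE hY' _,
    lap_const_mul hv hY' _]
  -- commute lap with euler
  have hLE : ∀ Z ∈ S15.Bs (n-1), lap (euler v) Z = euler (lap v) Z + 2 * lap v Z :=
    fun Z hZ => lap_euler hv hZ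
  have hLEE : lap (euler (euler v)) Y
      = (euler (euler (lap v)) Y + 2 * euler (lap v) Y)
        + 2 * (euler (lap v) Y + 2 * lap v Y) := by
    rw [lap_euler sE hY', euler_congr hLE hY',
      euler_add (diffAt (contDiffOn_euler sL) hY') ((diffAt sL hY').const_mul 2),
      euler_const_mul (diffAt sL hY') 2, hLE Y hY']
  rw [hLEE, hLE Y hY']
  ring
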